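/- Let T : ℝ^d → ℝ^d be a continuously differentiable map such that the derivative DT(x) is invertible for every x and ‖T(x)‖ → ∞ as ‖x‖ → ∞ (T is proper). Then T is a C¹-diffeomorphism of ℝ^d onto itself. -/

import Mathlib

open Set Filter Metric Topology

set_option linter.unusedSectionVars false
set_option maxHeartbeats 1000000

section HadamardAux
variable {F : Type*} [NormedAddCommGroup F] [NormedSpace ℝ F] {T : F → F}

/-- Uniqueness of lifts for a local homeomorphism. -/
theorem hadamard_uniq (hCH : ∀ x : F, ∃ e : OpenPartialHomeomorph F F, x ∈ e.source ∧ ⇑e = T)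
    {s : Set ℝ} (hs : IsPreconnected s) {u v : ℝ → F} (hu : Continuous u) (hv : Continuous v)
    (huv : ∀ t ∈ s, T (u t) = T (v t)) {t₀ : ℝ} (ht₀ : t₀ ∈ s) (h0 : u t₀ = v t₀) :
    Set.EqOn u v s := by
  haveI := Subtype.preconnectedSpace hs
  set C : Set s := {t : s | u ↑t = v ↑t} with hC
  have hclosed : IsClosed C := isClosed_eq (hu.comp continuous_subtype_val)
    (hv.comp continuous_subtype_val)
  have hopen : IsOpen C := by
    rw [isOpen_iff_forall_mem_open]
    intro t htC
    obtain ⟨e, hesrc, hecoe⟩ := hCH (u ↑t)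
    refine ⟨(fun t' : s => u ↑t') ⁻¹' e.source ∩ (fun t' : s => v ↑t') ⁻¹' e.source, ?_, ?_, ?_⟩
    · rintro t' ⟨hu', hv'⟩
      have h1 : T (u ↑t') = T (v ↑t') := huv ↑t' t'.2
      have hinj : Set.InjOn T e.source := by rw [← hecoe]; exact e.injOn
      exact hinj hu' hv' h1
    · exact ((hu.comp continuous_subtype_val).isOpen_preimage _ e.open_source).inter
        ((hv.comp continuous_subtype_val).isOpen_preimage _ e.open_source)
    · refine ⟨hesrc, ?_⟩
      simp only [Set.mem_preimage, show v ↑t = u ↑t from htC.symm]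
      exact hesrc
  have hne : C.Nonempty := ⟨⟨t₀, ht₀⟩, h0⟩
  have huniv : C = Set.univ := IsClopen.eq_univ ⟨hclosed, hopen⟩ hne
  intro t hts
  have hmem : (⟨t, hts⟩ : s) ∈ C := by rw [huniv]; trivial
  exact hmem

/-- Extending a lift through a chart. -/
theorem hadamard_glue {γ : ℝ → F} (hγ : Continuous γ) {x0 : F} {σ b : ℝ}
    (hσ0 : 0 ≤ σ) (hσb : σ ≤ b) {g : ℝ → F} (hg : Continuous g) (hg0 : g 0 = x0)
    (hlift : ∀ s, 0 ≤ s → s ≤ σ → T (g s) = γ s) {e : OpenPartialHomeomorph F F} (he : ⇑e = T)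
    (hsrc : g σ ∈ e.source) (htgt : ∀ s, σ ≤ s → s ≤ b → γ s ∈ e.target) :
    ∃ G : ℝ → F, Continuous G ∧ G 0 = x0 ∧ (∀ s, 0 ≤ s → s ≤ b → T (G s) = γ s) ∧
      G b = e.symm (γ b) := by
  have hmem : ∀ t : ℝ, γ (max σ (min t b)) ∈ e.target :=
    fun t => htgt _ (le_max_left _ _) (max_le hσb (min_le_right _ _))
  have hmatch : e.symm (γ σ) = g σ := by
    have h1 : γ σ = e (g σ) := by rw [he]; exact (hlift σ hσ0 le_rfl).symm
    rw [h1, e.left_inv hsrc]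
  have hsymmT : ∀ v ∈ e.target, T (e.symm v) = v := by
    intro v hv; rw [← he]; exact e.right_inv hv
  refine ⟨fun t => if t ≤ σ then g t else e.symm (γ (max σ (min t b))), ?_, ?_, ?_, ?_⟩
  · refine Continuous.if_le hg (e.continuousOn_symm.comp_continuous
        (hγ.comp (continuous_const.max (continuous_id.min continuous_const))) hmem)
        continuous_id continuous_const ?_
    intro t ht
    change t = σ at ht
    rw [ht, min_eq_left hσb, max_self, hmatch]
  · simp only [if_pos hσ0, hg0]
  · intro s hs0 hsb
    by_cases hsσ : s ≤ σ
    · simp only [if_pos hsσ]; exact hlift s hs0 hsσ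
    · simp only [if_neg hsσ]
      push_neg at hsσ
      rw [max_eq_right (le_min hsσ.le hσb), min_eq_left hsb]
      exact hsymmT _ (htgt s hsσ.le hsb)
  · by_cases hbσ : b ≤ σ
    · have : b = σ := le_antisymm hbσ hσb
      simp only [if_pos hbσ]; rw [this, hmatch]
    · simp only [if_neg hbσ]; rw [min_self, max_eq_right hσb]

/-- Existence of lifts of paths on `[0,1]`. -/
theorem hadamard_exist (hCH : ∀ x : F, ∃ e : OpenPartialHomeomorph F F, x ∈ e.source ∧ ⇑e = T)
    (hprop : IsProperMap T) {γ : ℝ → F} (hγ : Continuous γ) {x0 : F} (h0 : T x0 = γ 0) :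
    ∃ g : ℝ → F, Continuous g ∧ g 0 = x0 ∧ ∀ t, 0 ≤ t → t ≤ 1 → T (g t) = γ t := by
  set A : Set ℝ := {t | ∃ g : ℝ → F, Continuous g ∧ g 0 = x0 ∧
    ∀ s, 0 ≤ s → s ≤ t → T (g s) = γ s} with hA
  have hA0 : (0 : ℝ) ∈ A := by
    refine ⟨fun _ => x0, continuous_const, rfl, fun s hs0 hs1 => ?_⟩
    rw [le_antisymm hs1 hs0]; exact h0
  have hdown : ∀ t t' : ℝ, t ≤ t' → t' ∈ A → t ∈ A := by
    rintro t t' htt' ⟨g, hg, hg0, hl⟩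
    exact ⟨g, hg, hg0, fun s hs0 hst => hl s hs0 (hst.trans htt')⟩
  set S : Set ℝ := A ∩ Icc 0 1 with hS
  have hSne : (0 : ℝ) ∈ S := ⟨hA0, le_refl 0, zero_le_one⟩
  have hSbdd : BddAbove S := ⟨1, fun t ht => ht.2.2⟩
  set c : ℝ := sSup S with hc
  have hc0 : 0 ≤ c := le_csSup hSbdd hSne
  have hc1 : c ≤ 1 := csSup_le ⟨0, hSne⟩ fun t ht => ht.2.2
  -- main claim : there is δ > 0 with c + δ ∈ A
  have hclaim : ∃ δ > 0, c + δ ∈ A := by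
    -- find z, σ, g with T z = γ c, a lift g up to σ close to c, g σ near z
    -- First, get the cluster point z.
    have hzex : ∃ z : F, T z = γ c ∧ ∀ ε > 0, ∀ W : Set F, IsOpen W → z ∈ W →
        ∃ σ : ℝ, 0 ≤ σ ∧ c - ε < σ ∧ σ ≤ c ∧ ∃ g : ℝ → F, Continuous g ∧ g 0 = x0 ∧
          (∀ s, 0 ≤ s → s ≤ σ → T (g s) = γ s) ∧ g σ ∈ W := by
      by_cases hc0' : c = 0
      · refine ⟨x0, by rw [hc0', h0], fun ε hε W hW hzW => ⟨0, le_refl 0, by linarith, hc0'.ge, 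
          fun _ => x0, continuous_const, rfl, fun s hs0 hs1 => by rw [le_antisymm hs1 hs0]; exact h0, hzW⟩⟩
      · have hcpos : 0 < c := lt_of_le_of_ne hc0 (Ne.symm hc0')
        set sq : ℕ → ℝ := fun n => c - c * (1 / (n + 1)) with hsq
        have hsqlt : ∀ n, sq n < c := by
          intro n
          have : 0 < c * (1 / (n + 1)) := by positivity
          simp only [hsq]; linarith
        have hsq0 : ∀ n, 0 ≤ sq n := by
          intro n
          have h1 : c * (1 / (n + 1)) ≤ c * 1 := by
            apply mul_le_mul_of_nonneg_left _ hc0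
            rw [div_le_one (by positivity)]
            simp [le_add_iff_nonneg_left]
          simp only [hsq]; linarith [h1]
        have hsqtend : Tendsto sq atTop (𝓝 c) := by
          have h1 : Tendsto (fun n : ℕ => 1 / ((n : ℝ) + 1)) atTop (𝓝 0) :=
            tendsto_one_div_add_atTop_nhds_zero_nat
          have h2 : Tendsto (fun n : ℕ => c - c * (1 / (n + 1))) atTop (𝓝 (c - c * 0)) :=
            (tendsto_const_nhds.sub ((tendsto_const_nhds).mul h1))
          simp only [mul_zero, sub_zero] at h2
          rw [hsq]
          exact h2
        have hsqA : ∀ n, sq n ∈ A := by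
          intro n
          obtain ⟨a, haS, hlta⟩ := exists_lt_of_lt_csSup ⟨0, hSne⟩ (hsqlt n)
          exact hdown _ a hlta.le haS.1
        choose gs hgs hgs0 hgsl using hsqA
        set xs : ℕ → F := fun n => gs n (sq n) with hxs
        have hK : IsCompact (T ⁻¹' (γ '' Icc 0 c)) :=
          hprop.isCompact_preimage (isCompact_Icc.image hγ)
        have hxsK : ∀ n, xs n ∈ T ⁻¹' (γ '' Icc 0 c) := by
          intro n
          simp only [hxs, Set.mem_preimage]
          exact ⟨sq n, ⟨hsq0 n, (hsqlt n).le⟩, (hgsl n _ (hsq0 n) le_rfl).symm⟩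
        obtain ⟨z, hzK, φ, hφmono, hφtend⟩ := hK.tendsto_subseq hxsK
        have hsqφ : Tendsto (sq ∘ φ) atTop (𝓝 c) := hsqtend.comp hφmono.tendsto_atTop
        have hTz : T z = γ c := by
          have h1 : Tendsto (fun n => T (xs (φ n))) atTop (𝓝 (T z)) :=
            (hprop.continuous.tendsto z).comp hφtend
          have h2 : (fun n => T (xs (φ n))) = fun n => γ (sq (φ n)) := by
            funext n; exact hgsl (φ n) _ (hsq0 _) le_rfl
          rw [h2] at h1
          exact tendsto_nhds_unique h1 ((hγ.tendsto c).comp hsqφ)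
        refine ⟨z, hTz, fun ε hε W hW hzW => ?_⟩
        have h1 : ∀ᶠ n in atTop, xs (φ n) ∈ W := hφtend.eventually_mem (hW.mem_nhds hzW)
        have h2 : ∀ᶠ n in atTop, sq (φ n) > c - ε :=
          hsqφ.eventually (eventually_gt_nhds (by linarith))
        obtain ⟨n, hnW, hnε⟩ := (h1.and h2).exists
        exact ⟨sq (φ n), hsq0 _, hnε, (hsqlt _).le, gs (φ n), hgs _, hgs0 _, hgsl _, hnW⟩
    obtain ⟨z, hTz, hσex⟩ := hzex
    obtain ⟨e, hzsrc, hecoe⟩ := hCH z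
    have hγc : γ c ∈ e.target := by rw [← hTz, ← hecoe]; exact e.map_source hzsrc
    -- continuity of γ at c gives δ' with γ(ball c δ') ⊆ e.target
    obtain ⟨δ', hδ'pos, hδ'⟩ : ∃ δ' > 0, ∀ s : ℝ, dist s c < δ' → γ s ∈ e.target := by
      have : γ ⁻¹' e.target ∈ 𝓝 c := (hγ.tendsto c).eventually_mem (e.open_target.mem_nhds hγc)
      obtain ⟨δ', hδ'pos, hsub⟩ := Metric.mem_nhds_iff.mp this
      exact ⟨δ', hδ'pos, fun s hs => hsub hs⟩
    obtain ⟨σ, hσ0, hσgt, hσle, g, hg, hg0, hgl, hgW⟩ :=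
      hσex (δ' / 2) (by linarith) e.source e.open_source hzsrc
    have htgt : ∀ s, σ ≤ s → s ≤ c + δ' / 2 → γ s ∈ e.target := by
      intro s hs1 hs2
      apply hδ'
      rw [Real.dist_eq, abs_sub_lt_iff]
      constructor <;> nlinarith
    obtain ⟨G, hG, hG0, hGl, _⟩ := hadamard_glue hγ hσ0 (by linarith) hg hg0 hgl hecoe hgW htgt
    exact ⟨δ' / 2, by linarith, G, hG, hG0, hGl⟩
  obtain ⟨δ, hδpos, hδA⟩ := hclaim
  have hc1' : c = 1 := by
    by_contra hne
    have hlt : c < 1 := lt_of_le_of_ne hc1 hne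
    have hminA : min (c + δ) 1 ∈ S :=
      ⟨hdown _ _ (min_le_left _ _) hδA, le_min (by linarith) zero_le_one, min_le_right _ _⟩
    have hle : min (c + δ) 1 ≤ c := le_csSup hSbdd hminA
    exact absurd hle (not_le.mpr (lt_min (by linarith) hlt))
  have h1A : (1 : ℝ) ∈ A := hdown 1 (c + δ) (by linarith) hδA
  obtain ⟨g, hg, hg0, hgl⟩ := h1A
  exact ⟨g, hg, hg0, hgl⟩

/-- Lifts of straight segments depend continuously on the endpoint, locally. -/
theorem hadamard_cont (hCH : ∀ x : F, ∃ e : OpenPartialHomeomorph F F, x ∈ e.source ∧ ⇑e = T)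
    {x0 y0 y : F} {g : ℝ → F} (hg : Continuous g) (hg0 : g 0 = x0)
    (hlift : ∀ t, 0 ≤ t → t ≤ 1 → T (g t) = y0 + t • (y - y0)) :
    ∃ N : Set F, IsOpen N ∧ y ∈ N ∧ ∃ φ : F → F, ContinuousOn φ N ∧ φ y = g 1 ∧
      ∀ y' ∈ N, ∃ g' : ℝ → F, Continuous g' ∧ g' 0 = x0 ∧
        (∀ t, 0 ≤ t → t ≤ 1 → T (g' t) = y0 + t • (y' - y0)) ∧ g' 1 = φ y' := by
  classical
  choose ch hch1 hch2 using hCH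
  -- Lebesgue number for the covering of [0,1] by preimages of chart sources
  obtain ⟨δ, hδpos, hleb⟩ := lebesgue_number_lemma_of_metric (isCompact_Icc (a := (0:ℝ)) (b := 1))
    (c := fun τ : ℝ => g ⁻¹' (ch (g τ)).source)
    (fun τ => (ch (g τ)).open_source.preimage hg)
    (fun t _ => mem_iUnion.mpr ⟨t, hch1 (g t)⟩)
  obtain ⟨k, hk⟩ := exists_nat_one_div_lt hδpos
  set K : ℕ := k + 1 with hKdef
  have hKpos : (0 : ℝ) < K := by positivity
  have hKne : (K : ℝ) ≠ 0 := ne_of_gt hKpos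
  -- a chart for each subinterval
  have hseg : ∀ i : ℕ, i < K → ∃ e : OpenPartialHomeomorph F F, ⇑e = T ∧
      ∀ t, (i : ℝ)/K ≤ t → t ≤ ((i : ℝ)+1)/K → g t ∈ e.source := by
    intro i hiK
    have hiK' : (i : ℝ) + 1 ≤ K := by exact_mod_cast Nat.succ_le_of_lt hiK
    have hmem : (i : ℝ)/K ∈ Icc (0:ℝ) 1 := by
      constructor
      · positivity
      · rw [div_le_one hKpos]; linarith
    obtain ⟨τ, hτ⟩ := hleb _ hmem
    refine ⟨ch (g τ), hch2 _, fun t ht1 ht2 => ?_⟩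
    apply hτ
    rw [mem_ball, Real.dist_eq, abs_sub_lt_iff]
    have h1K : (K:ℝ) = (k:ℝ)+1 := by rw [hKdef]; push_cast; ring
    constructor
    · calc t - (i:ℝ)/K ≤ ((i:ℝ)+1)/K - (i:ℝ)/K := by linarith
        _ = 1/(K:ℝ) := by ring
        _ < δ := by rw [h1K]; exact hk
    · calc (i:ℝ)/K - t ≤ 0 := by linarith
        _ < δ := hδpos
  choose eseg hecoe hesrc using hseg
  -- the inductive construction
  have main : ∀ i : ℕ, i ≤ K → ∃ N : Set F, IsOpen N ∧ y ∈ N ∧ ∃ φ : F → F,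
      ContinuousOn φ N ∧ φ y = g ((i : ℝ)/K) ∧
      ∀ y' ∈ N, ∃ g' : ℝ → F, Continuous g' ∧ g' 0 = x0 ∧
        (∀ t, 0 ≤ t → t ≤ (i : ℝ)/K → T (g' t) = y0 + t • (y' - y0)) ∧
        g' ((i : ℝ)/K) = φ y' := by
    intro i
    induction i with
    | zero =>
      intro _
      have hTx0 : T x0 = y0 := by
        have := hlift 0 le_rfl zero_le_one
        rwa [hg0, zero_smul, add_zero] at this
      refine ⟨univ, isOpen_univ, mem_univ y, fun _ => x0, continuousOn_const, ?_, ?_⟩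
      · simp [hg0.symm]
      · intro y' _
        refine ⟨fun _ => x0, continuous_const, rfl, fun t ht0 ht1 => ?_, rfl⟩
        have ht : t = 0 := le_antisymm (by simpa using ht1) ht0
        rw [ht, zero_smul, add_zero, hTx0]
    | succ i ih =>
      intro hi1
      have hiK : i < K := Nat.lt_of_succ_le hi1
      obtain ⟨N, hNopen, hyN, φ, hφc, hφy, hφl⟩ := ih (Nat.le_of_succ_le hi1)
      set a : ℝ := (i : ℝ)/K with ha
      set b : ℝ := ((i : ℝ)+1)/K with hb
      have hcast : ((i+1 : ℕ) : ℝ)/K = b := by rw [hb]; push_cast [hKdef]; ring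
      have ha0 : 0 ≤ a := by positivity
      have hab : a < b := by
        rw [ha, hb, div_lt_div_iff_of_pos_right hKpos]
        linarith
      have hb1 : b ≤ 1 := by
        rw [hb, div_le_one hKpos]
        exact_mod_cast hi1
      set e := eseg i hiK with he
      have hecoe' : ⇑e = T := hecoe i hiK
      have hesrc' : ∀ t, a ≤ t → t ≤ b → g t ∈ e.source := hesrc i hiK
      have hsymmT : ∀ v ∈ e.target, T (e.symm v) = v := by
        intro v hv; rw [← hecoe']; exact e.right_inv hv
      have htv : ∀ t, a ≤ t → t ≤ b → y0 + t • (y - y0) ∈ e.target := by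
        intro t ht1 ht2
        rw [← hlift t (ha0.trans ht1) (ht2.trans hb1), ← hecoe']
        exact e.map_source (hesrc' t ht1 ht2)
      -- thickening
      have hsegcont : Continuous (fun t : ℝ => y0 + t • (y - y0)) :=
        continuous_const.add (continuous_id.smul continuous_const)
      have hKc : IsCompact ((fun t : ℝ => y0 + t • (y - y0)) '' Icc a b) :=
        isCompact_Icc.image hsegcont
      obtain ⟨ε, hεpos, hεsub⟩ := hKc.exists_thickening_subset_open e.open_target
        (by rintro _ ⟨t, ⟨ht1, ht2⟩, rfl⟩; exact htv t ht1 ht2)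
      have hball : ∀ y' : F, dist y' y < ε → ∀ t, a ≤ t → t ≤ b →
          y0 + t • (y' - y0) ∈ e.target := by
        intro y' hy' t ht1 ht2
        apply hεsub
        rw [Metric.mem_thickening_iff]
        refine ⟨y0 + t • (y - y0), ⟨t, ⟨ht1, ht2⟩, rfl⟩, ?_⟩
        rw [dist_eq_norm]
        have heq : (y0 + t • (y' - y0)) - (y0 + t • (y - y0)) = t • (y' - y) := by
          rw [smul_sub, smul_sub, smul_sub]; abel
        rw [heq, norm_smul, Real.norm_eq_abs, abs_of_nonneg (ha0.trans ht1)]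
        have ht01 : t ≤ 1 := ht2.trans hb1
        have hd : dist y' y = ‖y' - y‖ := dist_eq_norm _ _
        nlinarith [norm_nonneg (y' - y)]
      -- new neighborhood and endpoint map
      set N' : Set F := (N ∩ φ ⁻¹' e.source) ∩ ball y ε with hN'
      have hN'open : IsOpen N' :=
        (hφc.isOpen_inter_preimage hNopen e.open_source).inter isOpen_ball
      have hyN' : y ∈ N' := by
        refine ⟨⟨hyN, ?_⟩, mem_ball_self hεpos⟩
        rw [Set.mem_preimage, hφy]
        exact hesrc' a le_rfl hab.le
      set φ' : F → F := fun y' => e.symm (y0 + b • (y' - y0)) with hφ'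
      have hφ'c : ContinuousOn φ' N' := by
        apply e.continuousOn_symm.comp
        · exact (continuous_const.add ((continuous_id.sub continuous_const).const_smul b)).continuousOn
        · intro y' hy'
          exact hball y' hy'.2 b hab.le le_rfl
      have hφ'y : φ' y = g b := by
        rw [hφ']
        have h1 : y0 + b • (y - y0) = e (g b) := by
          rw [hecoe']; exact (hlift b (ha0.trans hab.le) hb1).symm
        simp only [h1]
        exact e.left_inv (hesrc' b hab.le le_rfl)
      refine ⟨N', hN'open, hyN', φ', hφ'c, by rw [hcast]; exact hφ'y, ?_⟩
      intro y' hy'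
      obtain ⟨g', hg', hg'0, hg'l, hg'a⟩ := hφl y' hy'.1.1
      have hφsrc : φ y' ∈ e.source := hy'.1.2
      have hdist : dist y' y < ε := hy'.2
      have hkey : e.symm (y0 + a • (y' - y0)) = φ y' := by
        have h1 : y0 + a • (y' - y0) = e (φ y') := by
          rw [hecoe', ← hg'a]
          exact (hg'l a ha0 le_rfl).symm
        rw [h1, e.left_inv hφsrc]
      have hclmem : ∀ t : ℝ, y0 + (max a (min t b)) • (y' - y0) ∈ e.target :=
        fun t => hball y' hdist _ (le_max_left _ _) (max_le hab.le (min_le_right _ _))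
      refine ⟨fun t => if t ≤ a then g' t else e.symm (y0 + (max a (min t b)) • (y' - y0)),
        ?_, ?_, ?_, ?_⟩
      · refine Continuous.if_le hg' (e.continuousOn_symm.comp_continuous
          (continuous_const.add (((continuous_const.max (continuous_id.min continuous_const))).smul
            continuous_const)) hclmem) continuous_id continuous_const ?_
        intro t ht
        change t = a at ht
        rw [ht, min_eq_left hab.le, max_self, hkey]
        exact hg'a
      · simp only [if_pos ha0, hg'0]
      · intro t ht0 htb
        rw [hcast] at htb
        by_cases hta : t ≤ a
        · simp only [if_pos hta]
          exact hg'l t ht0 hta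
        · simp only [if_neg hta]
          push_neg at hta
          rw [max_eq_right (le_min hta.le hab.le), min_eq_left htb]
          exact hsymmT _ (hball y' hdist t hta.le htb)
      · rw [hcast]
        simp only [if_neg (not_le.mpr hab)]
        rw [min_self, max_eq_right hab.le]
  obtain ⟨N, h1, h2, φ, h3, h4, h5⟩ := main K le_rfl
  have hKK : ((K : ℕ) : ℝ)/(K : ℝ) = 1 := div_self hKne
  rw [hKK] at h4 h5
  exact ⟨N, h1, h2, φ, h3, h4, h5⟩

theorem hadamard_surj (hCH : ∀ x : F, ∃ e : OpenPartialHomeomorph F F, x ∈ e.source ∧ ⇑e = T)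
    (hprop : IsProperMap T) [Nonempty F] [PreconnectedSpace F] : Function.Surjective T := by
  have hLH : IsLocalHomeomorph T := fun x => by
    obtain ⟨e, h1, h2⟩ := hCH x
    exact ⟨e, h1, h2.symm⟩
  have hopen : IsOpen (Set.range T) := hLH.isOpenMap.isOpen_range
  have hclosed : IsClosed (Set.range T) := hprop.isClosedMap.isClosed_range
  have : Set.range T = Set.univ :=
    IsClopen.eq_univ ⟨hclosed, hopen⟩ ⟨T (Classical.arbitrary F), Set.mem_range_self _⟩
  exact Set.range_eq_univ.mp this

theorem hadamard_inj (hCH : ∀ x : F, ∃ e : OpenPartialHomeomorph F F, x ∈ e.source ∧ ⇑e = T)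
    (hprop : IsProperMap T) [PreconnectedSpace F] : Function.Injective T := by
  intro a b hab
  set y0 : F := T a with hy0
  -- the "sheets" over segments starting at y0
  set A : F → Set F := fun x => {z | ∃ g : ℝ → F, Continuous g ∧ g 0 = x ∧
    (∀ t, 0 ≤ t → t ≤ 1 → T (g t) = y0 + t • (T z - y0)) ∧ g 1 = z} with hA
  have hself : ∀ x, T x = y0 → x ∈ A x := by
    intro x hx
    exact ⟨fun _ => x, continuous_const, rfl, fun t _ _ => by rw [hx, sub_self, smul_zero, add_zero],
      rfl⟩
  have hrev : ∀ u v : F, ∀ t : ℝ, u + (1-t) • (v - u) = v + t • (u - v) := by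
    intro u v t
    rw [sub_smul, one_smul, smul_sub, smul_sub]
    abel
  have hcover : ∀ z : F, ∃ x, T x = y0 ∧ z ∈ A x := by
    intro z
    have hγc : Continuous (fun t : ℝ => T z + t • (y0 - T z)) :=
      continuous_const.add (continuous_id.smul continuous_const)
    obtain ⟨g, hg, hg0, hgl⟩ := hadamard_exist hCH hprop hγc
      (x0 := z) (by rw [zero_smul, add_zero])
    refine ⟨g 1, by rw [hgl 1 zero_le_one le_rfl]; rw [one_smul]; abel, ?_⟩
    refine ⟨fun t => g (1 - t), hg.comp (continuous_const.sub continuous_id), by show g (1-0) = g 1; norm_num, ?_,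
      by show g (1-1) = z; rw [sub_self, hg0]⟩
    intro t ht0 ht1
    rw [hgl (1 - t) (by linarith) (by linarith), hrev]
  have hdisj : ∀ x x' : F, x ≠ x' → ∀ z, z ∈ A x → z ∈ A x' → False := by
    rintro x x' hne z ⟨g, hg, hg0, hgl, hg1⟩ ⟨g', hg', hg'0, hg'l, hg'1⟩
    have heq : Set.EqOn g g' (Icc 0 1) := by
      refine hadamard_uniq hCH isPreconnected_Icc hg hg' ?_ (Set.right_mem_Icc.mpr zero_le_one)
        (by rw [hg1, hg'1])
      intro t ⟨ht0, ht1⟩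
      rw [hgl t ht0 ht1, hg'l t ht0 ht1]
    exact hne (by rw [← hg0, ← hg'0]; exact heq (Set.left_mem_Icc.mpr zero_le_one))
  have hopen : ∀ x, IsOpen (A x) := by
    intro x
    rw [isOpen_iff_forall_mem_open]
    rintro z ⟨g, hg, hg0, hgl, hg1⟩
    obtain ⟨N, hNopen, hzN, φ, hφc, hφz, hφl⟩ := hadamard_cont hCH hg hg0 hgl
    obtain ⟨e, hzsrc, hecoe⟩ := hCH z
    have hTc : Continuous T := hprop.continuous
    refine ⟨(T ⁻¹' N ∩ (φ ∘ T) ⁻¹' e.source) ∩ e.source, ?_, ?_, ?_⟩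
    · rintro z' ⟨⟨hz'N, hz'φ⟩, hz'src⟩
      obtain ⟨g', hg', hg'0, hg'l, hg'1⟩ := hφl (T z') hz'N
      have hTφ : T (φ (T z')) = T z' := by
        have := hg'l 1 zero_le_one le_rfl
        rw [hg'1] at this
        rw [this, one_smul]; abel
      have hφz' : φ (T z') = z' := by
        have hinj : Set.InjOn T e.source := by rw [← hecoe]; exact e.injOn
        exact hinj hz'φ hz'src hTφ
      exact ⟨g', hg', hg'0, hg'l, by rw [hg'1, hφz']⟩
    · exact ((hφc.comp hTc.continuousOn (fun z' hz' => hz')).isOpen_inter_preimage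
        (hNopen.preimage hTc) e.open_source).inter e.open_source
    · exact ⟨⟨hzN, by simp only [Set.mem_preimage, Function.comp_apply, hφz, hg1]; exact hzsrc⟩,
        hzsrc⟩
  -- conclusion via connectedness
  by_contra hne
  set U : Set F := A a with hU
  set V : Set F := ⋃ x ∈ (T ⁻¹' {y0}) \ {a}, A x with hV
  have hUopen : IsOpen U := hopen a
  have hVopen : IsOpen V := isOpen_biUnion fun x _ => hopen x
  have hcover' : Set.univ ⊆ U ∪ V := by
    intro z _
    obtain ⟨x, hx, hzx⟩ := hcover z
    by_cases hxa : x = a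
    · exact Or.inl (show z ∈ A a from hxa ▸ hzx)
    · exact Or.inr (Set.mem_biUnion ⟨hx, hxa⟩ hzx)
  have hUne : (Set.univ ∩ U).Nonempty := ⟨a, trivial, hself a rfl⟩
  have hVne : (Set.univ ∩ V).Nonempty :=
    ⟨b, trivial, Set.mem_biUnion ⟨hab.symm, fun h => hne (h : b = a).symm⟩ (hself b hab.symm)⟩
  obtain ⟨z, _, hzU, hzV⟩ := isPreconnected_univ (u := U) (v := V) hUopen hVopen hcover' hUne hVne
  obtain ⟨x, hx, hzx⟩ := Set.mem_iUnion₂.mp hzV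
  exact hdisj a x (fun h => hx.2 (Set.mem_singleton_iff.mpr h.symm)) z hzU hzx

end HadamardAux

/-- Hadamard's global inverse function theorem: a `C¹` map `T : ℝ^d → ℝ^d`
whose derivative is invertible everywhere and which is proper
(`‖T x‖ → ∞` as `‖x‖ → ∞`) is a `C¹`-diffeomorphism of `ℝ^d` onto itself. -/
theorem hadamard_global_diffeomorphism
    (d : ℕ) (T : EuclideanSpace ℝ (Fin d) → EuclideanSpace ℝ (Fin d))
    (hT : ContDiff ℝ 1 T)
    (hinv : ∀ x, Function.Bijective (fderiv ℝ T x))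
    (hproper : Filter.Tendsto (fun x => ‖T x‖) (Bornology.cobounded (EuclideanSpace ℝ (Fin d)))
      Filter.atTop) :
    Function.Bijective T ∧ ContDiff ℝ 1 (Function.invFun T) := by
  have hderiv : ∀ x, HasFDerivAt T (fderiv ℝ T x) x :=
    fun x => (hT.differentiable one_ne_zero x).hasFDerivAt
  let Φ : EuclideanSpace ℝ (Fin d) →
      (EuclideanSpace ℝ (Fin d) ≃L[ℝ] EuclideanSpace ℝ (Fin d)) := fun x =>
    LinearEquiv.toContinuousLinearEquiv
      (LinearEquiv.ofBijective ((fderiv ℝ T x) : EuclideanSpace ℝ (Fin d) →ₗ[ℝ]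
        EuclideanSpace ℝ (Fin d)) (hinv x))
  have hΦcoe : ∀ x, ((Φ x) : EuclideanSpace ℝ (Fin d) →L[ℝ] EuclideanSpace ℝ (Fin d)) =
      fderiv ℝ T x := by
    intro x
    ext v
    rfl
  have hderiv' : ∀ x, HasFDerivAt T
      ((Φ x : EuclideanSpace ℝ (Fin d) ≃L[ℝ] EuclideanSpace ℝ (Fin d)) :
        EuclideanSpace ℝ (Fin d) →L[ℝ] EuclideanSpace ℝ (Fin d)) x := by
    intro x; rw [hΦcoe x]; exact hderiv x
  -- charts
  have hCH : ∀ x, ∃ e : OpenPartialHomeomorph (EuclideanSpace ℝ (Fin d)) (EuclideanSpace ℝ (Fin d)),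
      x ∈ e.source ∧ ⇑e = T := by
    intro x
    exact ⟨hT.contDiffAt.toOpenPartialHomeomorph T (hderiv' x) one_ne_zero,
      ContDiffAt.mem_toOpenPartialHomeomorph_source hT.contDiffAt (hderiv' x) one_ne_zero,
      ContDiffAt.toOpenPartialHomeomorph_coe hT.contDiffAt (hderiv' x) one_ne_zero⟩
  -- properness
  have hprop : IsProperMap T := by
    rw [isProperMap_iff_tendsto_cocompact]
    refine ⟨hT.continuous, ?_⟩
    rw [← Metric.cobounded_eq_cocompact (α := EuclideanSpace ℝ (Fin d))]
    exact tendsto_norm_atTop_iff_cobounded.mp hproper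
  have hsurj : Function.Surjective T := hadamard_surj hCH hprop
  have hinj : Function.Injective T := hadamard_inj hCH hprop
  refine ⟨⟨hinj, hsurj⟩, ?_⟩
  -- smoothness of the inverse
  rw [contDiff_iff_contDiffAt]
  intro y
  obtain ⟨x, rfl⟩ := hsurj y
  have hloc : ContDiffAt ℝ 1 (hT.contDiffAt.localInverse (hderiv' x) one_ne_zero) (T x) :=
    hT.contDiffAt.to_localInverse (f' := Φ x) (hderiv' x) one_ne_zero
  have hev : ∀ᶠ w in 𝓝 (T x),
      T ((hT.contDiffAt.localInverse (f' := Φ x) (hderiv' x) one_ne_zero) w) = w :=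
    (hT.contDiffAt.hasStrictFDerivAt' (hderiv' x) one_ne_zero).eventually_right_inverse
  have heq : Function.invFun T =ᶠ[𝓝 (T x)] hT.contDiffAt.localInverse (hderiv' x) one_ne_zero := by
    filter_upwards [hev] with w hw
    conv_lhs => rw [← hw]
    exact Function.leftInverse_invFun hinj _
  exact hloc.congr_of_eventuallyEq heq
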